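/- Expected joint error of the Gaussian linear posterior (Equation (21)): for any domain P over ℝ^d×{−1,+1} with P-almost surely x ≠ 0 and any w ∈ ℝ^d, the expected joint error satisfies e_P(ρ_w) = E_{(x,y)~P} [Φ(y·(w·x)/‖x‖)]². -/

import Mathlib

open MeasureTheory

noncomputable section

/-- The 0-1 loss on labels in `{−1,+1}`, encoded by `Bool` (`false ↦ −1`, `true ↦ +1`). -/
def l01 (a b : Bool) : ℝ := if a = b then 0 else 1

/-- The real value of a label: `true ↦ +1`, `false ↦ −1`. -/
def yval (b : Bool) : ℝ := if b then 1 else -1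

variable {d : ℕ}

/-- Dot product on `ℝ^d`. -/
def dotp (w x : Fin d → ℝ) : ℝ := ∑ i, w i * x i

/-- Euclidean norm on `ℝ^d`. -/
def nrm (x : Fin d → ℝ) : ℝ := Real.sqrt (∑ i, x i ^ 2)

open Classical in
/-- The linear classifier `h_w(x) = sign(w·x)` (`true ↦ +1`, `false ↦ −1`). -/
def hlin (w x : Fin d → ℝ) : Bool := if 0 < dotp w x then true else false

/-- The Gaussian measure `γ_w` on `ℝ^d` with mean `w` and identity covariance, given as the
product over coordinates of one-dimensional Gaussians `N(w_i, 1)`. -/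
def gauss (w : Fin d → ℝ) : Measure (Fin d → ℝ) :=
  Measure.pi fun i => ProbabilityTheory.gaussianReal (w i) 1

/-- The standard Gaussian tail function `Φ(z) = (1/√(2π)) ∫_z^∞ e^{−t²/2} dt`. -/
def gaussTail (z : ℝ) : ℝ :=
  ∫ t in Set.Ici z, Real.exp (-t ^ 2 / 2) / Real.sqrt (2 * Real.pi)


section AuxGaussian

open Real ProbabilityTheory

lemma quad_cast' (b c d x : ℝ) :
    ((b : ℂ) * x ^ 2 + c * x + d) = ((b * x ^ 2 + c * x + d : ℝ) : ℂ) := by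
  push_cast; ring

lemma real_integral_exp_quadratic' {b : ℝ} (hb : b < 0) (c d : ℝ) :
    ∫ x : ℝ, Real.exp (b * x ^ 2 + c * x + d)
      = Real.sqrt (π / (-b)) * Real.exp (d - c ^ 2 / (4 * b)) := by
  have h := integral_cexp_quadratic (b := (b : ℂ)) (by simpa using hb) (c : ℂ) (d : ℂ)
  simp_rw [quad_cast' b c d, ← Complex.ofReal_exp] at h
  have h2 : ((d : ℂ) - (c : ℂ) ^ 2 / (4 * (b : ℂ))) = ((d - c ^ 2 / (4 * b) : ℝ) : ℂ) := by
    push_cast; ring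
  have h3 : ((π : ℂ) / -(b : ℂ)) ^ (1 / 2 : ℂ) = ((Real.sqrt (π / -b) : ℝ) : ℂ) := by
    rw [show ((π : ℂ) / -(b : ℂ)) = ((π / -b : ℝ) : ℂ) by push_cast; ring]
    rw [show ((1/2 : ℂ)) = ((1/2 : ℝ) : ℂ) by norm_num]
    rw [← Complex.ofReal_cpow (le_of_lt (div_pos Real.pi_pos (neg_pos.mpr hb)))]
    rw [Real.sqrt_eq_rpow]
  rw [h2, h3, ← Complex.ofReal_exp, ← Complex.ofReal_mul,
    show (∫ x : ℝ, ((rexp (b * x ^ 2 + c * x + d) : ℝ) : ℂ))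
      = ((∫ x : ℝ, rexp (b * x ^ 2 + c * x + d) : ℝ) : ℂ) from integral_ofReal] at h
  exact_mod_cast h

lemma gaussianPDFReal_conv' (μ₁ μ₂ : ℝ) {v₁ v₂ : NNReal} (h₁ : v₁ ≠ 0) (h₂ : v₂ ≠ 0) (z : ℝ) :
    ∫ x : ℝ, gaussianPDFReal μ₁ v₁ x * gaussianPDFReal μ₂ v₂ (z - x)
      = gaussianPDFReal (μ₁ + μ₂) (v₁ + v₂) z := by
  have hV1 : (0:ℝ) < v₁ := by exact_mod_cast pos_iff_ne_zero.mpr h₁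
  have hV2 : (0:ℝ) < v₂ := by exact_mod_cast pos_iff_ne_zero.mpr h₂
  set V₁ := (v₁ : ℝ) with hv1d
  set V₂ := (v₂ : ℝ) with hv2d
  have hn1 : V₁ ≠ 0 := ne_of_gt hV1
  have hn2 : V₂ ≠ 0 := ne_of_gt hV2
  have hn12 : V₁ + V₂ ≠ 0 := by positivity
  set b : ℝ := -((V₁+V₂)/(2*V₁*V₂)) with hbd
  set c : ℝ := μ₁/V₁ + (z - μ₂)/V₂ with hcd
  set e : ℝ := -μ₁^2/(2*V₁) - (z-μ₂)^2/(2*V₂) with hed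
  have hb : b < 0 := by
    rw [hbd, neg_lt_zero]
    positivity
  have hstep : ∀ x : ℝ, gaussianPDFReal μ₁ v₁ x * gaussianPDFReal μ₂ v₂ (z - x)
      = ((√(2*π*V₁))⁻¹ * (√(2*π*V₂))⁻¹) * Real.exp (b * x ^ 2 + c * x + e) := by
    intro x
    simp only [gaussianPDFReal, ← hv1d, ← hv2d]
    rw [mul_mul_mul_comm, ← Real.exp_add]
    congr 1
    rw [hbd, hcd, hed]
    field_simp
    ring
  simp_rw [hstep]
  rw [integral_const_mul, real_integral_exp_quadratic' hb c e]
  have hVsum : (((v₁ + v₂ : NNReal)) : ℝ) = V₁ + V₂ := by push_cast; ring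
  simp only [gaussianPDFReal, hVsum]
  have h4b : (4:ℝ) * b ≠ 0 := by
    have : 4 * b < 0 := by linarith
    exact ne_of_lt this
  have hexp : e - c ^ 2 / (4 * b) = -(z - (μ₁ + μ₂))^2 / (2 * (V₁ + V₂)) := by
    have hkey : c ^ 2 / (4 * b) = e + (z - (μ₁ + μ₂))^2 / (2 * (V₁ + V₂)) := by
      rw [div_eq_iff h4b, hbd, hcd, hed]
      field_simp
      ring
    rw [hkey, neg_div]
    ring
  have hconst : (√(2*π*V₁))⁻¹ * (√(2*π*V₂))⁻¹ * √(π / -b) = (√(2*π*(V₁+V₂)))⁻¹ := by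
    rw [← Real.sqrt_inv, ← Real.sqrt_inv, ← Real.sqrt_inv,
      ← Real.sqrt_mul (by positivity), ← Real.sqrt_mul (by positivity)]
    congr 1
    rw [hbd]
    field_simp
  rw [← mul_assoc, hconst, hexp]

lemma integrable_gaussianPDFReal_mul' (μ₁ μ₂ : ℝ) (v₁ v₂ : NNReal) (z : ℝ) :
    Integrable fun x : ℝ => gaussianPDFReal μ₁ v₁ x * gaussianPDFReal μ₂ v₂ (z - x) := by
  refine Integrable.mono' ((integrable_gaussianPDFReal μ₁ v₁).mul_const ((√(2*π*v₂))⁻¹))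
    ?_ (ae_of_all _ fun x => ?_)
  · exact (((measurable_gaussianPDFReal μ₁ v₁).mul
      ((measurable_gaussianPDFReal μ₂ v₂).comp (measurable_const.sub measurable_id))) :
        Measurable fun x : ℝ => gaussianPDFReal μ₁ v₁ x * gaussianPDFReal μ₂ v₂ (z - x)
      ).aestronglyMeasurable
  · rw [Real.norm_eq_abs, abs_of_nonneg
      (mul_nonneg (gaussianPDFReal_nonneg _ _ _) (gaussianPDFReal_nonneg _ _ _))]
    refine mul_le_mul_of_nonneg_left ?_ (gaussianPDFReal_nonneg _ _ _)
    unfold gaussianPDFReal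
    calc (√(2*π*v₂))⁻¹ * rexp (- (z - x - μ₂)^2 / (2 * v₂))
        ≤ (√(2*π*v₂))⁻¹ * 1 := by
          refine mul_le_mul_of_nonneg_left ?_ (by positivity)
          rw [Real.exp_le_one_iff]
          apply div_nonpos_of_nonpos_of_nonneg
          · simp [sq_nonneg]
          · positivity
      _ = (√(2*π*v₂))⁻¹ := mul_one _

lemma gaussianReal_conv' (μ₁ μ₂ : ℝ) (v₁ v₂ : NNReal) :
    ((gaussianReal μ₁ v₁).prod (gaussianReal μ₂ v₂)).map (fun p : ℝ × ℝ => p.1 + p.2)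
      = gaussianReal (μ₁ + μ₂) (v₁ + v₂) := by
  by_cases h₁ : v₁ = 0
  · subst h₁
    rw [gaussianReal_zero_var, Measure.dirac_prod,
      Measure.map_map measurable_add measurable_prodMk_left]
    have : ((fun p : ℝ × ℝ => p.1 + p.2) ∘ Prod.mk μ₁) = (fun x => μ₁ + x) := rfl
    rw [this, gaussianReal_map_const_add, add_comm μ₂ μ₁, zero_add]
  by_cases h₂ : v₂ = 0
  · subst h₂
    rw [gaussianReal_zero_var, Measure.prod_dirac,
      Measure.map_map measurable_add measurable_prodMk_right]
    have : ((fun p : ℝ × ℝ => p.1 + p.2) ∘ (fun x => (x, μ₂))) = (fun x => x + μ₂) := rfl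
    rw [this, gaussianReal_map_add_const, add_zero]
  have h12 : v₁ + v₂ ≠ 0 := fun h => h₁ (by simpa using (add_eq_zero.mp h).1)
  ext s hs
  rw [Measure.map_apply measurable_add hs, Measure.prod_apply (measurable_add hs)]
  have hsec : ∀ x : ℝ, (gaussianReal μ₂ v₂) (Prod.mk x ⁻¹' ((fun p : ℝ×ℝ => p.1+p.2) ⁻¹' s))
      = ∫⁻ z in s, gaussianPDF μ₂ v₂ (z - x) := by
    intro x
    have : (Prod.mk x ⁻¹' ((fun p : ℝ×ℝ => p.1+p.2) ⁻¹' s)) = (fun y => x + y) ⁻¹' s := rfl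
    rw [this, ← Measure.map_apply (measurable_const_add x) hs, gaussianReal_map_const_add x,
      gaussianReal_apply _ h₂ s]
    congr 1 with z
    unfold gaussianPDF
    rw [← gaussianPDFReal_sub]
  simp_rw [hsec]
  rw [gaussianReal_of_var_ne_zero _ h₁,
    lintegral_withDensity_eq_lintegral_mul _ (measurable_gaussianPDF _ _)]
  swap
  · exact Measurable.lintegral_prod_right
      ((measurable_gaussianPDF μ₂ v₂).comp (measurable_snd.sub measurable_fst))
  have hmeas2 : Measurable (fun q : ℝ × ℝ =>
      gaussianPDF μ₁ v₁ q.1 * gaussianPDF μ₂ v₂ (q.2 - q.1)) :=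
    ((measurable_gaussianPDF μ₁ v₁).comp measurable_fst).mul
      ((measurable_gaussianPDF μ₂ v₂).comp (measurable_snd.sub measurable_fst))
  calc ∫⁻ x, gaussianPDF μ₁ v₁ x * ∫⁻ z in s, gaussianPDF μ₂ v₂ (z - x)
      = ∫⁻ x, ∫⁻ z in s, gaussianPDF μ₁ v₁ x * gaussianPDF μ₂ v₂ (z - x) := by
        congr 1 with x
        rw [← lintegral_const_mul _ (show Measurable fun z : ℝ => gaussianPDF μ₂ v₂ (z - x) from
          (measurable_gaussianPDF μ₂ v₂).comp (measurable_sub_const x))]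
    _ = ∫⁻ z in s, ∫⁻ x, gaussianPDF μ₁ v₁ x * gaussianPDF μ₂ v₂ (z - x) := by
        rw [lintegral_lintegral_swap]
        exact hmeas2.aemeasurable
    _ = ∫⁻ z in s, gaussianPDF (μ₁ + μ₂) (v₁ + v₂) z := by
        refine setLIntegral_congr_fun hs (fun z _ => ?_)
        unfold gaussianPDF
        simp_rw [← ENNReal.ofReal_mul (gaussianPDFReal_nonneg _ _ _)]
        rw [← ofReal_integral_eq_lintegral_ofReal (integrable_gaussianPDFReal_mul' μ₁ μ₂ v₁ v₂ z)
          (ae_of_all _ fun x => mul_nonneg (gaussianPDFReal_nonneg _ _ _)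
            (gaussianPDFReal_nonneg _ _ _)),
          gaussianPDFReal_conv' μ₁ μ₂ h₁ h₂ z]
    _ = gaussianReal (μ₁ + μ₂) (v₁ + v₂) s := (gaussianReal_apply _ h12 s).symm

lemma measurable_dotp' {n : ℕ} (x : Fin n → ℝ) :
    Measurable (fun u : Fin n → ℝ => ∑ i, u i * x i) :=
  Finset.measurable_sum _ fun i _ => (measurable_pi_apply i).mul_const _

lemma map_dotp' : ∀ (n : ℕ) (w x : Fin n → ℝ),
    (Measure.pi fun i => gaussianReal (w i) 1).map (fun u => ∑ i, u i * x i)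
      = gaussianReal (∑ i, w i * x i) (∑ i, (⟨x i ^ 2, sq_nonneg _⟩ : NNReal)) := by
  intro n
  induction n with
  | zero =>
    intro w x
    have h : (fun u : Fin 0 → ℝ => ∑ i, u i * x i) = fun _ => (0:ℝ) := by
      funext u; simp
    rw [h, Measure.map_const, measure_univ, one_smul]
    simp [gaussianReal_zero_var]
    exact (gaussianReal_zero_var 0).symm
  | succ n ih =>
    intro w x
    set e := MeasurableEquiv.piFinSuccAbove (fun _ : Fin (n+1) => ℝ) 0 with hed
    have hmp := measurePreserving_piFinSuccAbove (fun i : Fin (n+1) => gaussianReal (w i) 1) 0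
    have hpi : (Measure.pi fun i => gaussianReal (w i) 1)
        = ((gaussianReal (w 0) 1).prod
            (Measure.pi fun j : Fin n => gaussianReal (w (Fin.succAbove 0 j)) 1)).map e.symm := by
      rw [← hmp.map_eq, MeasurableEquiv.map_symm_map]
    rw [hpi, Measure.map_map (measurable_dotp' x) e.symm.measurable]
    have h0 : ∀ p : ℝ × (Fin n → ℝ), e.symm p 0 = p.1 := fun p => by
      simp [hed, MeasurableEquiv.piFinSuccAbove]
    have hsx : ∀ (p : ℝ × (Fin n → ℝ)) (j : Fin n), e.symm p (Fin.succ j) = p.2 j := fun p j => by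
      simp [hed, MeasurableEquiv.piFinSuccAbove]
    have hcomp : ((fun u : Fin (n+1) → ℝ => ∑ i, u i * x i) ∘ e.symm)
        = fun p : ℝ × (Fin n → ℝ) => p.1 * x 0 + ∑ j, p.2 j * x (Fin.succ j) := by
      funext p
      rw [Function.comp_apply, Fin.sum_univ_succ]
      simp only [h0, hsx]
    rw [hcomp]
    have hsplit : (fun p : ℝ × (Fin n → ℝ) => p.1 * x 0 + ∑ j, p.2 j * x (Fin.succ j))
        = (fun q : ℝ × ℝ => q.1 + q.2) ∘ (Prod.map (fun a : ℝ => a * x 0)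
            (fun u : Fin n → ℝ => ∑ j, u j * x (Fin.succ j))) := rfl
    have hm1 : Measurable fun a : ℝ => a * x 0 := measurable_id.mul_const _
    rw [hsplit, ← Measure.map_map measurable_add (hm1.prodMap (measurable_dotp' _)),
      ← Measure.map_prod_map _ _ hm1 (measurable_dotp' _)]
    have hsa : ∀ j : Fin n, Fin.succAbove 0 j = Fin.succ j := fun j => rfl
    simp_rw [hsa]
    have hmc : (Measure.map (fun a : ℝ => a * x 0) (gaussianReal (w 0) 1))
        = gaussianReal (x 0 * w 0) (⟨x 0 ^ 2, sq_nonneg _⟩ * 1) :=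
      ProbabilityTheory.gaussianReal_map_mul_const (x 0)
    rw [hmc, ih (fun j => w (Fin.succ j)) (fun j => x (Fin.succ j)), gaussianReal_conv']
    congr 1
    · rw [Fin.sum_univ_succ]; ring
    · have := Fin.sum_univ_succ (fun i => (⟨x i ^ 2, sq_nonneg (x i)⟩ : NNReal))
      exact (congrArg (· + _) (mul_one _)).trans this.symm

lemma gaussTail_nonneg (z : ℝ) : 0 ≤ gaussTail z :=
  integral_nonneg fun t => by positivity

lemma gaussianPDFReal_std (x : ℝ) :
    gaussianPDFReal 0 1 x = Real.exp (-x^2/2) / Real.sqrt (2*Real.pi) := by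
  unfold gaussianPDFReal
  rw [inv_mul_eq_div]
  norm_num

lemma std_Ici (a : ℝ) : (gaussianReal 0 1) (Set.Ici a) = ENNReal.ofReal (gaussTail a) := by
  rw [gaussianReal_apply_eq_integral 0 one_ne_zero]
  congr 1
  unfold gaussTail
  exact setIntegral_congr_fun measurableSet_Ici fun x _ => gaussianPDFReal_std x

lemma std_Ioi (a : ℝ) : (gaussianReal 0 1) (Set.Ioi a) = ENNReal.ofReal (gaussTail a) := by
  rw [← std_Ici a, gaussianReal_apply_eq_integral 0 one_ne_zero,
    gaussianReal_apply_eq_integral 0 one_ne_zero, MeasureTheory.integral_Ici_eq_integral_Ioi]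

lemma std_Iic (a : ℝ) : (gaussianReal 0 1) (Set.Iic a) = ENNReal.ofReal (gaussTail (-a)) := by
  rw [gaussianReal_apply_eq_integral 0 one_ne_zero, ← std_Ioi (-a),
    gaussianReal_apply_eq_integral 0 one_ne_zero]
  congr 1
  have heven : ∀ x : ℝ, gaussianPDFReal 0 1 x = gaussianPDFReal 0 1 (-x) := fun x => by
    rw [gaussianPDFReal_std, gaussianPDFReal_std, neg_sq]
  calc ∫ x in Set.Iic a, gaussianPDFReal 0 1 x
      = ∫ x in Set.Iic a, gaussianPDFReal 0 1 (-x) := by simp_rw [← heven]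
    _ = ∫ x in Set.Ioi (-a), gaussianPDFReal 0 1 x := integral_comp_neg_Iic a _

lemma gaussianReal_eq_map (m : ℝ) {v : NNReal} (hv : v ≠ 0) :
    gaussianReal m v = (gaussianReal 0 1).map (fun t => Real.sqrt v * t + m) := by
  have h1 : (gaussianReal 0 1).map (fun t : ℝ => Real.sqrt v * t) = gaussianReal 0 v := by
    rw [gaussianReal_map_const_mul]
    congr 1
    · ring
    · rw [mul_one]
      ext
      push_cast
      exact Real.sq_sqrt v.coe_nonneg
  have h2 : (fun t : ℝ => Real.sqrt v * t + m)
      = (fun s : ℝ => s + m) ∘ (fun t : ℝ => Real.sqrt v * t) := rfl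
  rw [h2, ← Measure.map_map (measurable_add_const m) (measurable_const_mul _), h1,
    gaussianReal_map_add_const, zero_add]

lemma gaussianReal_Iic (m : ℝ) {v : NNReal} (hv : v ≠ 0) :
    (gaussianReal m v) (Set.Iic 0) = ENNReal.ofReal (gaussTail (m / Real.sqrt v)) := by
  have hσ : 0 < Real.sqrt v := Real.sqrt_pos.mpr (by exact_mod_cast pos_iff_ne_zero.mpr hv)
  rw [gaussianReal_eq_map m hv, Measure.map_apply (by fun_prop) measurableSet_Iic]
  have hpre : (fun t : ℝ => Real.sqrt v * t + m) ⁻¹' Set.Iic 0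
      = Set.Iic (-(m / Real.sqrt v)) := by
    ext t
    simp only [Set.mem_preimage, Set.mem_Iic]
    rw [← neg_div, le_div_iff₀ hσ]
    constructor <;> intro h <;> nlinarith [mul_comm t (Real.sqrt v)]
  rw [hpre, std_Iic, neg_neg]

lemma gaussianReal_Ioi (m : ℝ) {v : NNReal} (hv : v ≠ 0) :
    (gaussianReal m v) (Set.Ioi 0) = ENNReal.ofReal (gaussTail (-(m / Real.sqrt v))) := by
  have hσ : 0 < Real.sqrt v := Real.sqrt_pos.mpr (by exact_mod_cast pos_iff_ne_zero.mpr hv)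
  rw [gaussianReal_eq_map m hv, Measure.map_apply (by fun_prop) measurableSet_Ioi]
  have hpre : (fun t : ℝ => Real.sqrt v * t + m) ⁻¹' Set.Ioi 0
      = Set.Ioi (-(m / Real.sqrt v)) := by
    ext t
    simp only [Set.mem_preimage, Set.mem_Ioi]
    rw [← neg_div, div_lt_iff₀ hσ]
    constructor <;> intro h <;> nlinarith [mul_comm t (Real.sqrt v)]
  rw [hpre, std_Ioi]

end AuxGaussian


lemma measurable_dotp'' {n : ℕ} (x : Fin n → ℝ) :
    Measurable (fun u : Fin n → ℝ => dotp u x) := by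
  unfold dotp
  exact measurable_dotp' x

section AuxClassifier

open Real ProbabilityTheory

lemma l01_nonneg (a b : Bool) : 0 ≤ l01 a b := by
  unfold l01; split <;> norm_num

lemma l01_le_one (a b : Bool) : l01 a b ≤ 1 := by
  unfold l01; split <;> norm_num

lemma gauss_map_dotp {d : ℕ} (w x : Fin d → ℝ) :
    (gauss w).map (fun u => dotp u x)
      = gaussianReal (dotp w x) (∑ i, (⟨x i ^ 2, sq_nonneg _⟩ : NNReal)) := by
  unfold gauss dotp
  exact map_dotp' d w x

lemma integral_l01 {d : ℕ} (w : Fin d → ℝ) {x : Fin d → ℝ} (hx : x ≠ 0) (b : Bool) :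
    ∫ u, l01 (hlin u x) b ∂(gauss w) = gaussTail (yval b * dotp w x / nrm x) := by
  set V : NNReal := ∑ i, (⟨x i ^ 2, sq_nonneg _⟩ : NNReal) with hVd
  have hVc : (V : ℝ) = ∑ i, x i ^ 2 := by
    rw [hVd]
    push_cast
    exact NNReal.coe_sum _ _
  have hVpos : (0:ℝ) < V := by
    rw [hVc]
    obtain ⟨i, hi⟩ := Function.ne_iff.mp hx
    exact Finset.sum_pos' (fun j _ => sq_nonneg _)
      ⟨i, Finset.mem_univ i, pow_two_pos_of_ne_zero hi⟩
  have hVne : V ≠ 0 := by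
    intro h
    rw [h] at hVpos
    simp at hVpos
  have hsqrt : Real.sqrt V = nrm x := by rw [hVc]; rfl
  cases b with
  | true =>
    have hind : ∀ u, l01 (hlin u x) true
        = Set.indicator ((fun u => dotp u x) ⁻¹' Set.Iic 0) (1 : (Fin d → ℝ) → ℝ) u := by
      intro u
      by_cases h : 0 < dotp u x
      · have : dotp u x ∉ Set.Iic 0 := by simpa using h
        simp [l01, hlin, h, Set.indicator, this]
      · have : dotp u x ∈ Set.Iic 0 := by simpa using not_lt.mp h
        simp [l01, hlin, h, Set.indicator, this]
    rw [integral_congr_ae (ae_of_all _ hind),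
      integral_indicator_one ((measurable_dotp'' x) measurableSet_Iic),
      measureReal_def, ← Measure.map_apply (measurable_dotp'' x) measurableSet_Iic,
      gauss_map_dotp, gaussianReal_Iic _ hVne, hsqrt,
      ENNReal.toReal_ofReal (gaussTail_nonneg _)]
    congr 1
    simp [yval]
  | false =>
    have hind : ∀ u, l01 (hlin u x) false
        = Set.indicator ((fun u => dotp u x) ⁻¹' Set.Ioi 0) (1 : (Fin d → ℝ) → ℝ) u := by
      intro u
      by_cases h : 0 < dotp u x
      · have : dotp u x ∈ Set.Ioi 0 := by simpa using h
        simp [l01, hlin, h, Set.indicator, this]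
      · have : dotp u x ∉ Set.Ioi 0 := by simpa using not_lt.mp h
        simp [l01, hlin, h, Set.indicator, this]
    rw [integral_congr_ae (ae_of_all _ hind),
      integral_indicator_one ((measurable_dotp'' x) measurableSet_Ioi),
      measureReal_def, ← Measure.map_apply (measurable_dotp'' x) measurableSet_Ioi,
      gauss_map_dotp, gaussianReal_Ioi _ hVne, hsqrt,
      ENNReal.toReal_ofReal (gaussTail_nonneg _)]
    congr 1
    rw [show yval false = -1 from rfl]
    ring

end AuxClassifier
/-- Expected joint error of the Gaussian linear posterior (Equation (21)): for any domain `P`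
over `ℝ^d×{−1,+1}` with `P`-almost surely `x ≠ 0` and any `w ∈ ℝ^d`,
`e_P(ρ_w) = E_{(x,y)~P} [Φ(y·(w·x)/‖x‖)]²`. -/
theorem gaussian_expected_joint_error (d : ℕ) (w : Fin d → ℝ)
    (P : Measure ((Fin d → ℝ) × Bool)) [IsProbabilityMeasure P]
    (hP : ∀ᵐ z ∂P, z.1 ≠ 0) :
    ∫ p, ∫ z, l01 (hlin p.1 z.1) z.2 * l01 (hlin p.2 z.1) z.2 ∂P
        ∂((gauss w).prod (gauss w))
      = ∫ z, (gaussTail (yval z.2 * dotp w z.1 / nrm z.1)) ^ 2 ∂P := by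
  haveI hg : IsProbabilityMeasure (gauss w) := by unfold gauss; infer_instance
  have hdot1 : Measurable (fun q : ((Fin d → ℝ) × (Fin d → ℝ)) × ((Fin d → ℝ) × Bool) =>
      dotp q.1.1 q.2.1) := by
    unfold dotp
    exact Finset.measurable_sum _ fun i _ =>
      ((measurable_pi_apply i).comp (measurable_fst.comp measurable_fst)).mul
        ((measurable_pi_apply i).comp (measurable_fst.comp measurable_snd))
  have hdot2 : Measurable (fun q : ((Fin d → ℝ) × (Fin d → ℝ)) × ((Fin d → ℝ) × Bool) =>
      dotp q.1.2 q.2.1) := by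
    unfold dotp
    exact Finset.measurable_sum _ fun i _ =>
      ((measurable_pi_apply i).comp (measurable_snd.comp measurable_fst)).mul
        ((measurable_pi_apply i).comp (measurable_fst.comp measurable_snd))
  have hlin1 : Measurable (fun q : ((Fin d → ℝ) × (Fin d → ℝ)) × ((Fin d → ℝ) × Bool) =>
      hlin q.1.1 q.2.1) := by
    unfold hlin
    exact Measurable.ite (measurableSet_lt measurable_const hdot1)
      measurable_const measurable_const
  have hlin2 : Measurable (fun q : ((Fin d → ℝ) × (Fin d → ℝ)) × ((Fin d → ℝ) × Bool) =>
      hlin q.1.2 q.2.1) := by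
    unfold hlin
    exact Measurable.ite (measurableSet_lt measurable_const hdot2)
      measurable_const measurable_const
  have hmF : Measurable (fun q : ((Fin d → ℝ) × (Fin d → ℝ)) × ((Fin d → ℝ) × Bool) =>
      l01 (hlin q.1.1 q.2.1) q.2.2 * l01 (hlin q.1.2 q.2.1) q.2.2) := by
    have h1 : Measurable (fun q : ((Fin d → ℝ) × (Fin d → ℝ)) × ((Fin d → ℝ) × Bool) =>
        l01 (hlin q.1.1 q.2.1) q.2.2) := by
      unfold l01
      exact Measurable.ite
        (measurableSet_eq_fun hlin1 (measurable_snd.comp measurable_snd))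
        measurable_const measurable_const
    have h2 : Measurable (fun q : ((Fin d → ℝ) × (Fin d → ℝ)) × ((Fin d → ℝ) × Bool) =>
        l01 (hlin q.1.2 q.2.1) q.2.2) := by
      unfold l01
      exact Measurable.ite
        (measurableSet_eq_fun hlin2 (measurable_snd.comp measurable_snd))
        measurable_const measurable_const
    exact h1.mul h2
  have hint : Integrable (Function.uncurry fun (p : (Fin d → ℝ) × (Fin d → ℝ))
      (z : (Fin d → ℝ) × Bool) => l01 (hlin p.1 z.1) z.2 * l01 (hlin p.2 z.1) z.2)
      (((gauss w).prod (gauss w)).prod P) := by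
    refine Integrable.mono' (integrable_const 1) hmF.aestronglyMeasurable
      (ae_of_all _ fun q => ?_)
    show |l01 (hlin q.1.1 q.2.1) q.2.2 * l01 (hlin q.1.2 q.2.1) q.2.2| ≤ 1
    rw [abs_of_nonneg (mul_nonneg (l01_nonneg _ _) (l01_nonneg _ _))]
    exact mul_le_one₀ (l01_le_one _ _) (l01_nonneg _ _) (l01_le_one _ _)
  rw [MeasureTheory.integral_integral_swap hint]
  refine integral_congr_ae ?_
  filter_upwards [hP] with z hz
  rw [MeasureTheory.integral_prod_mul (μ := gauss w) (ν := gauss w)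
    (f := fun u => l01 (hlin u z.1) z.2) (g := fun u => l01 (hlin u z.1) z.2),
    integral_l01 w hz z.2, sq]

end
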